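/- Let ε₁ > 0, ε₂ > 0 and let b ∈ ℝ satisfy 0 ≤ b and ε₂·b < 1. Then the entropy density h(r) = r·(log(r/(1 − ε₁ r − ε₂ b)) − 1) is strictly convex on the open interval I = (0, (1 − ε₂ b)/ε₁). -/

import Mathlib

private noncomputable def affineAux (c ε : ℝ) : ℝ →ᵃ[ℝ] ℝ :=
  ⟨fun r => c - ε * r, (-ε) • LinearMap.id, by intro p v; simp [smul_eq_mul]; ring⟩

private lemma affineAux_apply (c ε r : ℝ) : affineAux c ε r = c - ε * r := rfl


/-- Strict convexity of the entropy density of the second entropy–mobility pair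
(Lemma 4.3 of the paper). -/
theorem entropy_density_strictConvexOn
    (ε₁ ε₂ b : ℝ) (hε₁ : 0 < ε₁) (hε₂ : 0 < ε₂) (hb : 0 ≤ b) (hbb : ε₂ * b < 1) :
    StrictConvexOn ℝ (Set.Ioo (0 : ℝ) ((1 - ε₂ * b) / ε₁))
      (fun r : ℝ => r * (Real.log (r / (1 - ε₁ * r - ε₂ * b)) - 1)) := by
  set c : ℝ := 1 - ε₂ * b with hc_def
  have hc : 0 < c := by simp [hc_def]; linarith
  set s : Set ℝ := Set.Ioo (0 : ℝ) (c / ε₁) with hs_def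
  have hsconv : Convex ℝ s := convex_Ioo _ _
  -- positivity of the denominator on s
  have hD : ∀ r ∈ s, 0 < c - ε₁ * r := by
    intro r hr
    have h2 : r < c / ε₁ := hr.2
    have := (lt_div_iff₀' hε₁).mp h2
    linarith
  -- component 1 : r log r, strictly convex
  have h1 : StrictConvexOn ℝ s (fun r : ℝ => r * Real.log r) :=
    Real.strictConvexOn_mul_log.subset (fun r hr => le_of_lt hr.1) hsconv
  -- component 2 : (1/ε₁) * ((c - ε₁ r) log (c - ε₁ r)), convex
  have h2 : ConvexOn ℝ s
      (fun r : ℝ => (1 / ε₁) * ((c - ε₁ * r) * Real.log (c - ε₁ * r))) := by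
    have comp :
        ConvexOn ℝ s (fun r : ℝ => (c - ε₁ * r) * Real.log (c - ε₁ * r)) := by
      have := (Real.convexOn_mul_log.comp_affineMap (affineAux c ε₁)).subset
        (fun r hr => by
          show affineAux c ε₁ r ∈ Set.Ici (0 : ℝ)
          rw [affineAux_apply]; exact le_of_lt (hD r hr)) hsconv
      simpa [Function.comp_def, affineAux_apply] using this
    have := comp.smul (c := 1 / ε₁) (by positivity)
    simpa [smul_eq_mul] using this
  -- component 3 : (c/ε₁) * (- log (c - ε₁ r)), convex
  have h3 : ConvexOn ℝ s
      (fun r : ℝ => (c / ε₁) * (-Real.log (c - ε₁ * r))) := by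
    have negLog : ConvexOn ℝ (Set.Ioi (0 : ℝ)) (fun x : ℝ => -Real.log x) :=
      strictConcaveOn_log_Ioi.concaveOn.neg
    have comp : ConvexOn ℝ s (fun r : ℝ => -Real.log (c - ε₁ * r)) := by
      have := (negLog.comp_affineMap (affineAux c ε₁)).subset
        (fun r hr => by
          show affineAux c ε₁ r ∈ Set.Ioi (0 : ℝ)
          rw [affineAux_apply]; exact hD r hr) hsconv
      simpa [Function.comp_def, affineAux_apply] using this
    have := comp.smul (c := c / ε₁) (by positivity)
    simpa [smul_eq_mul] using this
  -- component 4 : -r, convex (affine)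
  have h4 : ConvexOn ℝ s (fun r : ℝ => -r) :=
    ⟨hsconv, fun x _ y _ a b _ _ _ => by simp only [smul_eq_mul]; apply le_of_eq; ring⟩
  -- the sum, strictly convex
  have hg : StrictConvexOn ℝ s
      (fun r : ℝ => r * Real.log r
        + (1 / ε₁) * ((c - ε₁ * r) * Real.log (c - ε₁ * r))
        + (c / ε₁) * (-Real.log (c - ε₁ * r)) + (-r)) := by
    have := ((h1.add_convexOn h2).add_convexOn h3).add_convexOn h4
    exact this
  -- the two functions agree on s
  have heq : ∀ r ∈ s,
      r * (Real.log (r / (1 - ε₁ * r - ε₂ * b)) - 1)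
        = r * Real.log r
          + (1 / ε₁) * ((c - ε₁ * r) * Real.log (c - ε₁ * r))
          + (c / ε₁) * (-Real.log (c - ε₁ * r)) + (-r) := by
    intro r hr
    have hr0 : 0 < r := hr.1
    have hDr : 0 < c - ε₁ * r := hD r hr
    have hde : 1 - ε₁ * r - ε₂ * b = c - ε₁ * r := by rw [hc_def]; ring
    rw [hde, Real.log_div (ne_of_gt hr0) (ne_of_gt hDr)]
    field_simp
    ring
  refine ⟨hsconv, fun x hx y hy hxy a b' ha hb' hab => ?_⟩
  have hmem : a • x + b' • y ∈ s := hsconv hx hy ha.le hb'.le hab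
  beta_reduce
  rw [heq _ hmem, heq _ hx, heq _ hy]
  simp only [smul_eq_mul]
  exact hg.2 hx hy hxy ha hb' hab
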